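/- For the Model 1 chain on a finite connected graph with N ≥ 2 vertices and M ≥ 1 dollars, for every vertex x, every 0 ≤ d ≤ M, and every initial configuration, lim_{t→∞} P(ξ_t(x) = d) = C(M+N−d−2, N−2) / C(M+N−1, N−1). -/

import Mathlib

open Filter

/-- The result of moving one dollar from `x` to `y` in configuration `ξ`
(nothing happens if `ξ x = 0`). -/
def moveDollar {V : Type*} [DecidableEq V] (ξ : V → ℕ) (x y : V) : V → ℕ :=
  fun z => if ξ x = 0 then ξ z
    else ξ z - (if z = x then 1 else 0) + (if z = y then 1 else 0)

/-- The state space `𝒜_{N,M}` of configurations with `M` dollars, as a finite set. -/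
def stateSpace (V : Type*) [Fintype V] [DecidableEq V] (M : ℕ) : Finset (V → ℕ) :=
  (Fintype.piFinset fun _ : V => Finset.range (M + 1)).filter fun ξ => ∑ x, ξ x = M

/-- Model 1 transition probabilities: an oriented edge `(x,y)` is chosen uniformly among
the `2|E|` oriented edges and one dollar moves from `x` to `y` if possible. -/
noncomputable def pOne {V : Type*} [Fintype V] [DecidableEq V] (G : SimpleGraph V)
    [DecidableRel G.Adj] (ξ ξ' : V → ℕ) : ℝ :=
  ((Finset.univ.filter fun e : V × V => G.Adj e.1 e.2 ∧ moveDollar ξ e.1 e.2 = ξ').card : ℝ)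
    / ((Finset.univ.filter fun e : V × V => G.Adj e.1 e.2).card : ℝ)

/-- `t`-step transition probabilities of Model 1. -/
noncomputable def pOneIter {V : Type*} [Fintype V] [DecidableEq V] (G : SimpleGraph V)
    [DecidableRel G.Adj] (M : ℕ) : ℕ → (V → ℕ) → (V → ℕ) → ℝ
  | 0, ξ, ξ' => if ξ = ξ' then 1 else 0
  | t + 1, ξ, ξ' => ∑ η ∈ stateSpace V M, pOneIter G M t ξ η * pOne G η ξ'

set_option linter.unusedSectionVars false
set_option linter.unnecessarySeqFocus false
set_option linter.unusedVariables false
set_option maxHeartbeats 1000000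

section Model

variable {V : Type*} [Fintype V] [DecidableEq V] (G : SimpleGraph V) [DecidableRel G.Adj]
  {M : ℕ}

/-- The oriented edge set. -/
def oEdges : Finset (V × V) := Finset.univ.filter fun e : V × V => G.Adj e.1 e.2

theorem mem_stateSpace {ξ : V → ℕ} : ξ ∈ stateSpace V M ↔ ∑ z, ξ z = M := by
  constructor
  · intro h; exact (Finset.mem_filter.1 h).2
  · intro h
    refine Finset.mem_filter.2 ⟨Fintype.mem_piFinset.2 fun a => ?_, h⟩
    rw [Finset.mem_range, Nat.lt_succ_iff, ← h]
    exact Finset.single_le_sum (fun i _ => Nat.zero_le _) (Finset.mem_univ a)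

/-- Shift one dollar from `a` to `b`, unconditionally. -/
def shift (ξ : V → ℕ) (a b : V) : V → ℕ :=
  fun z => ξ z - (if z = a then 1 else 0) + (if z = b then 1 else 0)

variable {G}

theorem moveDollar_eq_shift {ξ : V → ℕ} {a : V} (b : V) (h : ξ a ≠ 0) :
    moveDollar ξ a b = shift ξ a b := by
  funext z; simp [moveDollar, shift, h]

theorem shift_self {ξ : V → ℕ} {a : V} (h : 1 ≤ ξ a) : shift ξ a a = ξ := by
  funext z; simp only [shift]; split_ifs with h1 <;> [skip; rfl] <;> subst h1 <;> omega

theorem shift_shift {ξ : V → ℕ} {a c : V} (b : V) (h : 1 ≤ ξ a) (hac : a ≠ c) :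
    shift (shift ξ a c) c b = shift ξ a b := by
  funext z; simp only [shift]; split_ifs <;> subst_eqs <;> omega

theorem shift_cancel {ξ : V → ℕ} {a b : V} (h : 1 ≤ ξ a) (hab : a ≠ b) :
    shift (shift ξ a b) b a = ξ := by
  funext z; simp only [shift]; split_ifs <;> subst_eqs <;> omega

theorem shift_mem {ξ : V → ℕ} {a : V} (b : V) (hξ : ξ ∈ stateSpace V M) (h : 1 ≤ ξ a) :
    shift ξ a b ∈ stateSpace V M := by
  have hs : ∑ z, ξ z = M := mem_stateSpace.1 hξ
  refine mem_stateSpace.2 ?_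
  have hM : 1 ≤ M := by
    calc 1 ≤ ξ a := h
    _ ≤ ∑ z, ξ z := Finset.single_le_sum (fun i _ => Nat.zero_le _) (Finset.mem_univ a)
    _ = M := hs
  have h2 : ∑ z, (ξ z - if z = a then 1 else 0) = M - 1 := by
    rw [← Finset.sum_erase_add _ _ (Finset.mem_univ a), if_pos rfl]
    rw [← Finset.sum_erase_add _ ξ (Finset.mem_univ a)] at hs
    have h3 : ∑ z ∈ Finset.univ.erase a, (ξ z - if z = a then 1 else 0)
        = ∑ z ∈ Finset.univ.erase a, ξ z :=
      Finset.sum_congr rfl fun z hz => by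
        rw [if_neg (Finset.mem_erase.1 hz).1, Nat.sub_zero]
    rw [h3]
    omega
  calc ∑ z, shift ξ a b z
      = (∑ z, (ξ z - if z = a then 1 else 0)) + ∑ z, (if z = b then 1 else 0) := by
        rw [← Finset.sum_add_distrib]; rfl
    _ = (M - 1) + 1 := by rw [h2, Finset.sum_ite_eq' Finset.univ b (fun _ => 1),
        if_pos (Finset.mem_univ b)]
    _ = M := by omega

theorem moveDollar_mem {ξ : V → ℕ} (a b : V) (hξ : ξ ∈ stateSpace V M) :
    moveDollar ξ a b ∈ stateSpace V M := by
  by_cases h : ξ a = 0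
  · have : moveDollar ξ a b = ξ := by funext z; simp [moveDollar, h]
    rwa [this]
  · rw [moveDollar_eq_shift b h]
    exact shift_mem b hξ (Nat.one_le_iff_ne_zero.2 h)

end Model

section Model2
variable {V : Type*} [Fintype V] [DecidableEq V] {G : SimpleGraph V} [DecidableRel G.Adj]
  {M : ℕ}

theorem mem_oEdges {e : V × V} : e ∈ oEdges G ↔ G.Adj e.1 e.2 := by
  simp [oEdges]

theorem exists_adj (hG : G.Connected) (hc : 1 < Fintype.card V) (v : V) :
    ∃ w, G.Adj v w := by
  obtain ⟨u, hu⟩ := Fintype.exists_ne_of_one_lt_card hc v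
  obtain ⟨w⟩ := hG v u
  cases w with
  | nil => exact absurd rfl hu.symm
  | cons h _ => exact ⟨_, h⟩

theorem oEdges_card_pos (hG : G.Connected) (hc : 1 < Fintype.card V) :
    0 < (oEdges G).card := by
  obtain ⟨v⟩ := hG.nonempty
  obtain ⟨w, hw⟩ := exists_adj hG hc v
  exact Finset.card_pos.2 ⟨(v, w), mem_oEdges.2 hw⟩

theorem pOne_nonneg (ξ ξ' : V → ℕ) : 0 ≤ pOne G ξ ξ' :=
  div_nonneg (Nat.cast_nonneg _) (Nat.cast_nonneg _)

theorem pOne_eq (ξ ξ' : V → ℕ) :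
    pOne G ξ ξ' = (((oEdges G).filter fun e => moveDollar ξ e.1 e.2 = ξ').card : ℝ)
      / ((oEdges G).card : ℝ) := by
  rw [pOne, oEdges, Finset.filter_filter]

theorem sum_pOne_row (hE : 0 < (oEdges G).card) {ξ : V → ℕ} (hξ : ξ ∈ stateSpace V M) :
    ∑ ξ' ∈ stateSpace V M, pOne G ξ ξ' = 1 := by
  have key : ∑ ξ' ∈ stateSpace V M,
      (((oEdges G).filter fun e => moveDollar ξ e.1 e.2 = ξ').card) = (oEdges G).card :=
    (Finset.card_eq_sum_card_fiberwise
      (fun e _ => moveDollar_mem e.1 e.2 hξ)).symm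
  calc ∑ ξ' ∈ stateSpace V M, pOne G ξ ξ'
      = (∑ ξ' ∈ stateSpace V M,
          (((oEdges G).filter fun e => moveDollar ξ e.1 e.2 = ξ').card : ℝ))
        / ((oEdges G).card : ℝ) := by
        rw [Finset.sum_div]; exact Finset.sum_congr rfl fun ξ' _ => pOne_eq ξ ξ'
    _ = 1 := by
        rw [← Nat.cast_sum, key, div_self]
        exact_mod_cast hE.ne'

/-- The number of `ξ ∈ S` with `moveDollar ξ a b = ξ'`. -/
theorem card_preimage {a b : V} (hab : a ≠ b) {ξ' : V → ℕ} (hξ' : ξ' ∈ stateSpace V M) :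
    ((stateSpace V M).filter fun ξ => moveDollar ξ a b = ξ').card
      = (if ξ' a = 0 then 1 else 0) + (if ξ' b = 0 then 0 else 1) := by
  have hmain : ((stateSpace V M).filter fun ξ => moveDollar ξ a b = ξ')
      = (if ξ' a = 0 then {ξ'} else ∅) ∪ (if ξ' b = 0 then ∅ else {shift ξ' b a}) := by
    ext ξ
    simp only [Finset.mem_filter, Finset.mem_union]
    constructor
    · rintro ⟨hξ, hmove⟩
      by_cases h0 : ξ a = 0
      · have : ξ = ξ' := by
          rw [← hmove]; funext z; simp [moveDollar, h0]
        subst this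
        left; rw [if_pos h0]; exact Finset.mem_singleton_self _
      · rw [moveDollar_eq_shift b h0] at hmove
        have h1 : 1 ≤ ξ a := Nat.one_le_iff_ne_zero.2 h0
        have hb : ξ' b = ξ b + 1 := by
          rw [← hmove]; simp [shift, hab.symm]
        have hx : ξ = shift ξ' b a := by
          rw [← hmove, shift_cancel h1 hab]
        right; rw [if_neg (by omega)]
        exact Finset.mem_singleton.2 hx
    · intro h
      rcases h with h | h
      · split_ifs at h with h0
        · rw [Finset.mem_singleton] at h; subst h
          exact ⟨hξ', by funext z; simp [moveDollar, h0]⟩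
        · exact absurd h (Finset.notMem_empty _)
      · split_ifs at h with h0
        · exact absurd h (Finset.notMem_empty _)
        · rw [Finset.mem_singleton] at h; subst h
          have hb1 : 1 ≤ ξ' b := Nat.one_le_iff_ne_zero.2 h0
          have ha' : shift ξ' b a a = ξ' a + 1 := by simp [shift, hab]
          refine ⟨shift_mem a hξ' hb1, ?_⟩
          rw [moveDollar_eq_shift b (by omega), shift_cancel hb1 (Ne.symm hab)]
  rw [hmain, Finset.card_union_of_disjoint]
  · split_ifs with h1 h2 h2 <;> simp
  · split_ifs with h1 h2 h2 <;> simp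
    intro h
    have : shift ξ' b a a = ξ' a + 1 := by simp [shift, hab]
    have h' := congrFun h a
    omega

theorem sum_pOne_col (hE : 0 < (oEdges G).card) {ξ' : V → ℕ} (hξ' : ξ' ∈ stateSpace V M) :
    ∑ ξ ∈ stateSpace V M, pOne G ξ ξ' = 1 := by
  have swap_sum : ∑ e ∈ oEdges G, (if ξ' e.1 = 0 then (1:ℕ) else 0)
      = ∑ e ∈ oEdges G, (if ξ' e.2 = 0 then 1 else 0) := by
    refine Finset.sum_nbij' (i := Prod.swap) (j := Prod.swap)
      (fun e he => mem_oEdges.2 (mem_oEdges.1 he).symm)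
      (fun e he => mem_oEdges.2 (mem_oEdges.1 he).symm)
      (fun e _ => Prod.swap_swap e) (fun e _ => Prod.swap_swap e)
      (fun e _ => rfl)
  have key : ∑ ξ ∈ stateSpace V M,
      ((oEdges G).filter fun e => moveDollar ξ e.1 e.2 = ξ').card = (oEdges G).card := by
    simp_rw [Finset.card_filter]
    rw [Finset.sum_comm]
    have h1 : ∀ e ∈ oEdges G,
        (∑ ξ ∈ stateSpace V M, if moveDollar ξ e.1 e.2 = ξ' then (1:ℕ) else 0)
        = (if ξ' e.1 = 0 then 1 else 0) + (if ξ' e.2 = 0 then 0 else 1) := fun e he => by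
      rw [← Finset.card_filter]
      exact card_preimage (G.ne_of_adj (mem_oEdges.1 he)) hξ'
    rw [Finset.sum_congr rfl h1, Finset.sum_add_distrib, swap_sum, ← Finset.sum_add_distrib]
    have h2 : ∀ e ∈ oEdges G,
        ((if ξ' e.2 = 0 then (1:ℕ) else 0) + (if ξ' e.2 = 0 then 0 else 1)) = 1 :=
      fun e _ => by split_ifs <;> rfl
    rw [Finset.sum_congr rfl h2]
    simp
  calc ∑ ξ ∈ stateSpace V M, pOne G ξ ξ'
      = (∑ ξ ∈ stateSpace V M,
          (((oEdges G).filter fun e => moveDollar ξ e.1 e.2 = ξ').card : ℝ))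
        / ((oEdges G).card : ℝ) := by
        rw [Finset.sum_div]; exact Finset.sum_congr rfl fun ξ _ => pOne_eq ξ ξ'
    _ = 1 := by
        rw [← Nat.cast_sum, key, div_self]
        exact_mod_cast hE.ne'

theorem pOneIter_nonneg : ∀ (t : ℕ) (ξ ξ' : V → ℕ), 0 ≤ pOneIter G M t ξ ξ'
  | 0, ξ, ξ' => by unfold pOneIter; split_ifs <;> norm_num
  | t + 1, ξ, ξ' => Finset.sum_nonneg fun η _ =>
      mul_nonneg (pOneIter_nonneg t ξ η) (pOne_nonneg η ξ')

theorem pOneIter_succ_left {ξ ξ' : V → ℕ} (hξ : ξ ∈ stateSpace V M)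
    (hξ' : ξ' ∈ stateSpace V M) : ∀ t : ℕ,
    pOneIter G M (t + 1) ξ ξ' = ∑ η ∈ stateSpace V M, pOne G ξ η * pOneIter G M t η ξ' := by
  intro t
  induction t generalizing ξ' with
  | zero =>
    show (∑ η ∈ stateSpace V M, pOneIter G M 0 ξ η * pOne G η ξ') = _
    rw [Finset.sum_eq_single ξ (fun η _ hη => by simp [pOneIter, Ne.symm hη])
      (fun h => absurd hξ h)]
    rw [Finset.sum_eq_single ξ' (fun η _ hη => by simp [pOneIter, hη])
      (fun h => absurd hξ' h)]
    simp [pOneIter]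
  | succ t ih =>
    show (∑ η ∈ stateSpace V M, pOneIter G M (t+1) ξ η * pOne G η ξ') = _
    have h1 : ∀ η ∈ stateSpace V M, pOneIter G M (t+1) ξ η * pOne G η ξ'
        = ∑ ζ ∈ stateSpace V M, pOne G ξ ζ * pOneIter G M t ζ η * pOne G η ξ' :=
      fun η hη => by rw [ih hη, Finset.sum_mul]
    rw [Finset.sum_congr rfl h1, Finset.sum_comm]
    refine Finset.sum_congr rfl fun ζ hζ => ?_
    show _ = pOne G ξ ζ * pOneIter G M (t+1) ζ ξ'
    show _ = pOne G ξ ζ * ∑ η ∈ stateSpace V M, pOneIter G M t ζ η * pOne G η ξ'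
    rw [Finset.mul_sum]
    exact Finset.sum_congr rfl fun η _ => by ring

theorem pOneIter_add {ξ ξ' : V → ℕ} (hξ : ξ ∈ stateSpace V M)
    (hξ' : ξ' ∈ stateSpace V M) (s : ℕ) : ∀ t : ℕ,
    pOneIter G M (s + t) ξ ξ' = ∑ η ∈ stateSpace V M, pOneIter G M s ξ η * pOneIter G M t η ξ' := by
  intro t
  induction t generalizing ξ' with
  | zero =>
    rw [Finset.sum_eq_single ξ' (fun η _ hη => by simp [pOneIter, hη])
      (fun h => absurd hξ' h)]
    simp [pOneIter]
  | succ t ih =>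
    have : s + (t + 1) = (s + t) + 1 := rfl
    rw [this]
    show (∑ η ∈ stateSpace V M, pOneIter G M (s+t) ξ η * pOne G η ξ') = _
    have h1 : ∀ η ∈ stateSpace V M, pOneIter G M (s+t) ξ η * pOne G η ξ'
        = ∑ ζ ∈ stateSpace V M, pOneIter G M s ξ ζ * pOneIter G M t ζ η * pOne G η ξ' :=
      fun η hη => by rw [ih hη, Finset.sum_mul]
    rw [Finset.sum_congr rfl h1, Finset.sum_comm]
    refine Finset.sum_congr rfl fun ζ hζ => ?_
    show _ = pOneIter G M s ξ ζ * pOneIter G M (t+1) ζ ξ'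
    show _ = pOneIter G M s ξ ζ * ∑ η ∈ stateSpace V M, pOneIter G M t ζ η * pOne G η ξ'
    rw [Finset.mul_sum]
    exact Finset.sum_congr rfl fun η _ => by ring

theorem sum_pOneIter_row (hE : 0 < (oEdges G).card) {ξ : V → ℕ} (hξ : ξ ∈ stateSpace V M) :
    ∀ t : ℕ, ∑ ξ' ∈ stateSpace V M, pOneIter G M t ξ ξ' = 1
  | 0 => by
    rw [Finset.sum_eq_single ξ (fun η _ hη => by simp [pOneIter, Ne.symm hη])
      (fun h => absurd hξ h)]
    simp [pOneIter]
  | t + 1 => by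
    simp only [pOneIter]
    rw [Finset.sum_comm]
    have h1 : ∀ η ∈ stateSpace V M,
        ∑ ξ' ∈ stateSpace V M, pOneIter G M t ξ η * pOne G η ξ'
          = pOneIter G M t ξ η := fun η hη => by
      rw [← Finset.mul_sum, sum_pOne_row hE hη, mul_one]
    rw [Finset.sum_congr rfl h1]
    exact sum_pOneIter_row hE hξ t

theorem sum_pOneIter_col (hE : 0 < (oEdges G).card) {ξ' : V → ℕ} (hξ' : ξ' ∈ stateSpace V M) :
    ∀ t : ℕ, ∑ ξ ∈ stateSpace V M, pOneIter G M t ξ ξ' = 1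
  | 0 => by
    rw [Finset.sum_eq_single ξ' (fun η _ hη => by simp [pOneIter, hη])
      (fun h => absurd hξ' h)]
    simp [pOneIter]
  | t + 1 => by
    simp only [pOneIter]
    rw [Finset.sum_comm]
    have h1 : ∀ η ∈ stateSpace V M,
        ∑ ξ ∈ stateSpace V M, pOneIter G M t ξ η * pOne G η ξ'
          = pOne G η ξ' := fun η hη => by
      rw [← Finset.sum_mul, sum_pOneIter_col hE hη t, one_mul]
    rw [Finset.sum_congr rfl h1]
    exact sum_pOne_col hE hξ'

theorem pOne_pos (hE : 0 < (oEdges G).card) {ξ ξ' : V → ℕ} {a b : V}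
    (ha : G.Adj a b) (h : moveDollar ξ a b = ξ') : 0 < pOne G ξ ξ' := by
  rw [pOne_eq]
  refine div_pos ?_ (by exact_mod_cast hE)
  have : (a, b) ∈ (oEdges G).filter fun e => moveDollar ξ e.1 e.2 = ξ' :=
    Finset.mem_filter.2 ⟨mem_oEdges.2 ha, h⟩
  exact_mod_cast Finset.card_pos.2 ⟨_, this⟩

theorem pOneIter_pos_step {ξ η ξ' : V → ℕ} (hξ : ξ ∈ stateSpace V M)
    (hη : η ∈ stateSpace V M) (hξ' : ξ' ∈ stateSpace V M) {t : ℕ}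
    (h1 : 0 < pOne G ξ η) (h2 : 0 < pOneIter G M t η ξ') :
    0 < pOneIter G M (t + 1) ξ ξ' := by
  rw [pOneIter_succ_left hξ hξ']
  calc (0:ℝ) < pOne G ξ η * pOneIter G M t η ξ' := mul_pos h1 h2
    _ ≤ _ := Finset.single_le_sum (f := fun η => pOne G ξ η * pOneIter G M t η ξ')
        (fun η _ => mul_nonneg (pOne_nonneg _ _) (pOneIter_nonneg _ _ _)) hη

theorem pOneIter_pos_add {ξ η ξ' : V → ℕ} (hξ : ξ ∈ stateSpace V M)
    (hη : η ∈ stateSpace V M) (hξ' : ξ' ∈ stateSpace V M) {s t : ℕ}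
    (h1 : 0 < pOneIter G M s ξ η) (h2 : 0 < pOneIter G M t η ξ') :
    0 < pOneIter G M (s + t) ξ ξ' := by
  rw [pOneIter_add hξ hξ']
  calc (0:ℝ) < pOneIter G M s ξ η * pOneIter G M t η ξ' := mul_pos h1 h2
    _ ≤ _ := Finset.single_le_sum (f := fun η => pOneIter G M s ξ η * pOneIter G M t η ξ')
        (fun η _ => mul_nonneg (pOneIter_nonneg _ _ _) (pOneIter_nonneg _ _ _)) hη

end Model2

section Model3
variable {V : Type*} [Fintype V] [DecidableEq V] {G : SimpleGraph V} [DecidableRel G.Adj]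
  {M : ℕ}

theorem walk_transport (hE : 0 < (oEdges G).card) :
    ∀ {a b : V} (w : G.Walk a b) (ξ : V → ℕ), ξ ∈ stateSpace V M → 1 ≤ ξ a →
      0 < pOneIter G M w.length ξ (shift ξ a b) := by
  intro a b w
  induction w with
  | nil =>
    intro ξ hξ h
    rw [shift_self h]
    simp [pOneIter]
  | @cons a c b hadj w ih =>
    intro ξ hξ h
    have hac : a ≠ c := G.ne_of_adj hadj
    have hη : shift ξ a c ∈ stateSpace V M := shift_mem c hξ h
    have hηc : 1 ≤ shift ξ a c c := by
      show 1 ≤ _ - _ + _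
      rw [if_pos rfl]
      omega
    have hstep : 0 < pOne G ξ (shift ξ a c) :=
      pOne_pos hE hadj (moveDollar_eq_shift c (by omega))
    have hrest := ih (shift ξ a c) hη hηc
    rw [shift_shift b h hac] at hrest
    have hfin : shift ξ a b ∈ stateSpace V M := shift_mem b hξ h
    rw [SimpleGraph.Walk.length_cons]
    exact pOneIter_pos_step hξ hη hfin hstep hrest

/-- All dollars at `v₀`. -/
def deltaConf (v₀ : V) (M : ℕ) : V → ℕ := fun z => if z = v₀ then M else 0

theorem deltaConf_mem (v₀ : V) : deltaConf v₀ M ∈ stateSpace V M := by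
  refine mem_stateSpace.2 ?_
  show (∑ z, if z = v₀ then M else 0) = M
  rw [Finset.sum_ite_eq' Finset.univ v₀ (fun _ => M), if_pos (Finset.mem_univ v₀)]

theorem eq_delta_of_full {ξ : V → ℕ} (hξ : ξ ∈ stateSpace V M) (v₀ : V)
    (h : M ≤ ξ v₀) : ξ = deltaConf v₀ M := by
  have hs : ∑ z, ξ z = M := mem_stateSpace.1 hξ
  have hv : ξ v₀ ≤ M := hs ▸ Finset.single_le_sum (fun i _ => Nat.zero_le _) (Finset.mem_univ v₀)
  funext z
  by_cases hz : z = v₀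
  · subst hz; simp [deltaConf]; omega
  · rw [deltaConf]; rw [if_neg hz]
    have h1 : ξ z + ξ v₀ ≤ M := by
      rw [← hs, ← Finset.sum_erase_add _ ξ (Finset.mem_univ v₀)]
      exact Nat.add_le_add_right
        (Finset.single_le_sum (fun i _ => Nat.zero_le _)
          (Finset.mem_erase.2 ⟨hz, Finset.mem_univ z⟩)) _
    omega

theorem exists_excess {ξ : V → ℕ} (hξ : ξ ∈ stateSpace V M) (v₀ : V)
    (h : ξ v₀ < M) : ∃ z, z ≠ v₀ ∧ 1 ≤ ξ z := by
  have hs : ∑ z, ξ z = M := mem_stateSpace.1 hξ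
  have h2 : ∑ z ∈ Finset.univ.erase v₀, ξ z ≠ 0 := by
    have := Finset.sum_erase_add Finset.univ ξ (Finset.mem_univ v₀)
    omega
  obtain ⟨z, hz, hz2⟩ := Finset.exists_ne_zero_of_sum_ne_zero h2
  exact ⟨z, (Finset.mem_erase.1 hz).1, Nat.one_le_iff_ne_zero.2 hz2⟩

theorem reach_delta (hG : G.Connected) (hE : 0 < (oEdges G).card) (v₀ : V) :
    ∀ (k : ℕ) (ξ : V → ℕ), ξ ∈ stateSpace V M → M - ξ v₀ ≤ k →
      ∃ t, 0 < pOneIter G M t ξ (deltaConf v₀ M) := by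
  intro k
  induction k with
  | zero =>
    intro ξ hξ hk
    rw [eq_delta_of_full hξ v₀ (by omega)]
    exact ⟨0, by simp [pOneIter]⟩
  | succ k ih =>
    intro ξ hξ hk
    by_cases hfull : M ≤ ξ v₀
    · rw [eq_delta_of_full hξ v₀ hfull]
      exact ⟨0, by simp [pOneIter]⟩
    · obtain ⟨z, hz, hz1⟩ := exists_excess hξ v₀ (by omega)
      obtain ⟨w⟩ := hG z v₀
      have h1 := walk_transport hE w ξ hξ hz1
      have hη : shift ξ z v₀ ∈ stateSpace V M := shift_mem v₀ hξ hz1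
      have hηv : shift ξ z v₀ v₀ = ξ v₀ + 1 := by
        show ξ v₀ - _ + _ = _
        rw [if_neg (Ne.symm hz), if_pos rfl]
        omega
      obtain ⟨s, hs⟩ := ih (shift ξ z v₀) hη (by omega)
      exact ⟨w.length + s, pOneIter_pos_add hξ hη (deltaConf_mem v₀) h1 hs⟩

theorem reach_from_delta (hG : G.Connected) (hE : 0 < (oEdges G).card) (v₀ : V) :
    ∀ (k : ℕ) (ξ : V → ℕ), ξ ∈ stateSpace V M → M - ξ v₀ ≤ k →
      ∃ t, 0 < pOneIter G M t (deltaConf v₀ M) ξ := by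
  intro k
  induction k with
  | zero =>
    intro ξ hξ hk
    rw [eq_delta_of_full hξ v₀ (by omega)]
    exact ⟨0, by simp [pOneIter]⟩
  | succ k ih =>
    intro ξ hξ hk
    by_cases hfull : M ≤ ξ v₀
    · rw [eq_delta_of_full hξ v₀ hfull]
      exact ⟨0, by simp [pOneIter]⟩
    · obtain ⟨z, hz, hz1⟩ := exists_excess hξ v₀ (by omega)
      obtain ⟨w⟩ := hG v₀ z
      have hη : shift ξ z v₀ ∈ stateSpace V M := shift_mem v₀ hξ hz1
      have hηv : shift ξ z v₀ v₀ = ξ v₀ + 1 := by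
        show ξ v₀ - _ + _ = _
        rw [if_neg (Ne.symm hz), if_pos rfl]
        omega
      obtain ⟨s, hs⟩ := ih (shift ξ z v₀) hη (by omega)
      have h1 := walk_transport hE w (shift ξ z v₀) hη (by omega)
      rw [shift_cancel hz1 hz] at h1
      exact ⟨s + w.length, pOneIter_pos_add (deltaConf_mem v₀) hη hξ hs h1⟩

theorem delta_hold (hG : G.Connected) (hc : 1 < Fintype.card V)
    (hE : 0 < (oEdges G).card) (v₀ : V) :
    ∀ k : ℕ, 0 < pOneIter G M k (deltaConf v₀ M) (deltaConf v₀ M) := by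
  have hstep : 0 < pOne G (deltaConf v₀ M) (deltaConf v₀ M) := by
    obtain ⟨u, hu⟩ := Fintype.exists_ne_of_one_lt_card hc v₀
    obtain ⟨w, hw⟩ := exists_adj hG hc u
    refine pOne_pos hE hw ?_
    have h0 : deltaConf v₀ M u = 0 := by rw [deltaConf, if_neg hu]
    funext z; simp [moveDollar, h0]
  intro k
  induction k with
  | zero => simp [pOneIter]
  | succ k ih =>
    exact pOneIter_pos_step (deltaConf_mem v₀) (deltaConf_mem v₀) (deltaConf_mem v₀) hstep ih

theorem minorization (hG : G.Connected) (hc : 1 < Fintype.card V)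
    (hE : 0 < (oEdges G).card) :
    ∃ (t₀ : ℕ) (ε : ℝ), 1 ≤ t₀ ∧ 0 < ε ∧
      ∀ ξ ∈ stateSpace V M, ∀ ξ' ∈ stateSpace V M, ε ≤ pOneIter G M t₀ ξ ξ' := by
  classical
  obtain ⟨v₀⟩ := hG.nonempty
  have hδ := deltaConf_mem (M := M) v₀
  have hf : ∀ ξ : V → ℕ, ∃ t, ξ ∈ stateSpace V M → 0 < pOneIter G M t ξ (deltaConf v₀ M) := by
    intro ξ
    by_cases h : ξ ∈ stateSpace V M
    · obtain ⟨t, ht⟩ := reach_delta hG hE v₀ (M - ξ v₀) ξ h le_rfl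
      exact ⟨t, fun _ => ht⟩
    · exact ⟨0, fun hh => absurd hh h⟩
  have hg : ∀ ξ : V → ℕ, ∃ t, ξ ∈ stateSpace V M → 0 < pOneIter G M t (deltaConf v₀ M) ξ := by
    intro ξ
    by_cases h : ξ ∈ stateSpace V M
    · obtain ⟨t, ht⟩ := reach_from_delta hG hE v₀ (M - ξ v₀) ξ h le_rfl
      exact ⟨t, fun _ => ht⟩
    · exact ⟨0, fun hh => absurd hh h⟩
  choose f hfp using hf
  choose g hgp using hg
  set S := stateSpace V M with hS
  set T1 := S.sup f
  set T2 := S.sup g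
  set t₀ := T1 + 1 + T2 with ht₀
  have hpos : ∀ ξ ∈ S, ∀ ξ' ∈ S, 0 < pOneIter G M t₀ ξ ξ' := by
    intro ξ hξ ξ' hξ'
    have h1 : 0 < pOneIter G M T1 ξ (deltaConf v₀ M) := by
      have : T1 = f ξ + (T1 - f ξ) := by
        have := Finset.le_sup (f := f) hξ; omega
      rw [this]
      exact pOneIter_pos_add hξ hδ hδ (hfp ξ hξ) (delta_hold hG hc hE v₀ _)
    have h2 : 0 < pOneIter G M (1 + T2) (deltaConf v₀ M) ξ' := by
      have : 1 + T2 = (1 + (T2 - g ξ')) + g ξ' := by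
        have := Finset.le_sup (f := g) hξ'; omega
      rw [this]
      exact pOneIter_pos_add hδ hδ hξ' (delta_hold hG hc hE v₀ _) (hgp ξ' hξ')
    have : t₀ = T1 + (1 + T2) := by omega
    rw [this]
    exact pOneIter_pos_add hξ hδ hξ' h1 h2
  have hne : (S ×ˢ S).Nonempty := ⟨(deltaConf v₀ M, deltaConf v₀ M), Finset.mem_product.2 ⟨hδ, hδ⟩⟩
  refine ⟨t₀, (S ×ˢ S).inf' hne (fun p => pOneIter G M t₀ p.1 p.2), by omega, ?_, ?_⟩
  · refine (Finset.lt_inf'_iff _).2 ?_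
    rintro ⟨ξ, ξ'⟩ hp
    obtain ⟨h1, h2⟩ := Finset.mem_product.1 hp
    exact hpos ξ h1 ξ' h2
  · intro ξ hξ ξ' hξ'
    exact Finset.inf'_le (fun p => pOneIter G M t₀ p.1 p.2) (Finset.mk_mem_product hξ hξ')

end Model3

section Model4
variable {V : Type*} [Fintype V] [DecidableEq V] {G : SimpleGraph V} [DecidableRel G.Adj]
  {M : ℕ}

theorem pOneIter_tendsto (hG : G.Connected) (hc : 1 < Fintype.card V)
    {ξ₀ ρ : V → ℕ} (h₀ : ξ₀ ∈ stateSpace V M) (hρ : ρ ∈ stateSpace V M) :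
    Tendsto (fun t => pOneIter G M t ξ₀ ρ) atTop
      (nhds (1 / ((stateSpace V M).card : ℝ))) := by
  classical
  have hE : 0 < (oEdges G).card := oEdges_card_pos hG hc
  obtain ⟨t₀, ε, ht₀, hε, hmin⟩ := minorization (M := M) hG hc hE
  set S := stateSpace V M with hSdef
  have hne : S.Nonempty := ⟨ρ, hρ⟩
  set K : ℝ := (S.card : ℝ) with hK
  have hK0 : 0 < K := by rw [hK]; exact Nat.cast_pos.2 (Finset.card_pos.2 hne)
  set f : ℕ → (V → ℕ) → ℝ := fun t ξ => pOneIter G M t ξ ρ with hf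
  set Mx : ℕ → ℝ := fun t => S.sup' hne (f t) with hMx
  set mn : ℕ → ℝ := fun t => S.inf' hne (f t) with hmn
  have hle : ∀ t, ∀ ξ ∈ S, f t ξ ≤ Mx t := fun t ξ hξ => Finset.le_sup' (f t) hξ
  have hge : ∀ t, ∀ ξ ∈ S, mn t ≤ f t ξ := fun t ξ hξ => Finset.inf'_le (f t) hξ
  -- monotonicity
  have hMxmono : ∀ t, Mx (t + 1) ≤ Mx t := by
    intro t
    refine Finset.sup'_le hne (f (t+1)) fun ξ hξ => ?_
    have : f (t+1) ξ = ∑ η ∈ S, pOne G ξ η * f t η := pOneIter_succ_left hξ hρ t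
    rw [this]
    calc ∑ η ∈ S, pOne G ξ η * f t η
        ≤ ∑ η ∈ S, pOne G ξ η * Mx t := Finset.sum_le_sum fun η hη =>
          mul_le_mul_of_nonneg_left (hle t η hη) (pOne_nonneg _ _)
      _ = (∑ η ∈ S, pOne G ξ η) * Mx t := (Finset.sum_mul _ _ _).symm
      _ = Mx t := by rw [sum_pOne_row hE hξ, one_mul]
  have hmnmono : ∀ t, mn t ≤ mn (t + 1) := by
    intro t
    refine Finset.le_inf' hne (f (t+1)) fun ξ hξ => ?_
    have : f (t+1) ξ = ∑ η ∈ S, pOne G ξ η * f t η := pOneIter_succ_left hξ hρ t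
    rw [this]
    calc mn t = (∑ η ∈ S, pOne G ξ η) * mn t := by rw [sum_pOne_row hE hξ, one_mul]
      _ = ∑ η ∈ S, pOne G ξ η * mn t := Finset.sum_mul _ _ _
      _ ≤ ∑ η ∈ S, pOne G ξ η * f t η := Finset.sum_le_sum fun η hη =>
          mul_le_mul_of_nonneg_left (hge t η hη) (pOne_nonneg _ _)
  set θ : ℝ := 1 - K * ε with hθ
  have hKeps : K * ε = ∑ _η ∈ S, ε := by
    rw [Finset.sum_const, nsmul_eq_mul]
  have hθ0 : 0 ≤ θ := by
    have h1 : ∑ η ∈ S, pOneIter G M t₀ ρ η = 1 := sum_pOneIter_row hE hρ t₀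
    have h2 : K * ε ≤ 1 := by
      rw [hKeps, ← h1]
      exact Finset.sum_le_sum fun η hη => hmin ρ hρ η hη
    simp only [hθ]; linarith
  have hθ1 : θ < 1 := by
    have : 0 < K * ε := mul_pos hK0 hε
    simp only [hθ]; linarith
  -- contraction
  have hcontr : ∀ t, Mx (t₀ + t) - mn (t₀ + t) ≤ θ * (Mx t - mn t) := by
    intro t
    have pair : ∀ ξ ∈ S, ∀ ζ ∈ S, f (t₀ + t) ξ - f (t₀ + t) ζ ≤ θ * (Mx t - mn t) := by
      intro ξ hξ ζ hζ
      have hdecomp : ∀ χ ∈ S, f (t₀ + t) χ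
          = (∑ η ∈ S, (pOneIter G M t₀ χ η - ε) * f t η) + ε * ∑ η ∈ S, f t η := by
        intro χ hχ
        rw [Finset.mul_sum, ← Finset.sum_add_distrib]
        have : f (t₀ + t) χ = ∑ η ∈ S, pOneIter G M t₀ χ η * f t η :=
          pOneIter_add hχ hρ t₀ t
        rw [this]
        exact Finset.sum_congr rfl fun η _ => by ring
      have hcoeff : ∀ χ ∈ S, ∑ η ∈ S, (pOneIter G M t₀ χ η - ε) = θ := by
        intro χ hχ
        rw [Finset.sum_sub_distrib, sum_pOneIter_row hE hχ, ← hKeps]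
      have hup : ∑ η ∈ S, (pOneIter G M t₀ ξ η - ε) * f t η ≤ θ * Mx t := by
        calc ∑ η ∈ S, (pOneIter G M t₀ ξ η - ε) * f t η
            ≤ ∑ η ∈ S, (pOneIter G M t₀ ξ η - ε) * Mx t := Finset.sum_le_sum fun η hη =>
              mul_le_mul_of_nonneg_left (hle t η hη)
                (by have := hmin ξ hξ η hη; linarith)
          _ = (∑ η ∈ S, (pOneIter G M t₀ ξ η - ε)) * Mx t := (Finset.sum_mul _ _ _).symm
          _ = θ * Mx t := by rw [hcoeff ξ hξ]
      have hdown : θ * mn t ≤ ∑ η ∈ S, (pOneIter G M t₀ ζ η - ε) * f t η := by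
        calc θ * mn t = (∑ η ∈ S, (pOneIter G M t₀ ζ η - ε)) * mn t := by rw [hcoeff ζ hζ]
          _ = ∑ η ∈ S, (pOneIter G M t₀ ζ η - ε) * mn t := Finset.sum_mul _ _ _
          _ ≤ _ := Finset.sum_le_sum fun η hη =>
              mul_le_mul_of_nonneg_left (hge t η hη)
                (by have := hmin ζ hζ η hη; linarith)
      have e1 := hdecomp ξ hξ
      have e2 := hdecomp ζ hζ
      rw [e1, e2, mul_sub]
      linarith
    refine sub_le_iff_le_add.2 (Finset.sup'_le hne (f (t₀ + t)) fun ξ hξ => ?_)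
    have h1 : f (t₀ + t) ξ - θ * (Mx t - mn t) ≤ mn (t₀ + t) :=
      Finset.le_inf' hne (f (t₀ + t)) fun ζ hζ => by
        have := pair ξ hξ ζ hζ; linarith
    linarith
  -- iterate contraction
  set D : ℕ → ℝ := fun t => Mx t - mn t with hD
  have hD0 : ∀ t, 0 ≤ D t := fun t => by
    have := hle t ρ hρ; have := hge t ρ hρ; simp only [hD]; linarith
  have hDanti : ∀ s t, s ≤ t → D t ≤ D s := by
    intro s t hst
    induction t with
    | zero => rw [Nat.le_zero.1 hst]
    | succ t ih =>
      rcases Nat.lt_or_ge s (t+1) with h | h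
      · have := ih (by omega)
        have := hMxmono t
        have := hmnmono t
        simp only [hD] at *
        linarith
      · rw [Nat.le_antisymm hst h]
  have hD1 : D 0 ≤ 1 := by
    have hMx1 : Mx 0 ≤ 1 := Finset.sup'_le hne (f 0) fun ξ _ => by
      simp only [hf, pOneIter]; split_ifs <;> norm_num
    have : 0 ≤ mn 0 := Finset.le_inf' hne (f 0) fun ξ _ => pOneIter_nonneg _ _ _
    simp only [hD]; linarith
  have hDpow : ∀ n, D (t₀ * n) ≤ θ ^ n := by
    intro n
    induction n with
    | zero => simpa using hD1
    | succ n ih =>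
      have h1 : t₀ * (n + 1) = t₀ + t₀ * n := by ring
      rw [h1]
      calc D (t₀ + t₀ * n) ≤ θ * D (t₀ * n) := hcontr _
        _ ≤ θ * θ ^ n := mul_le_mul_of_nonneg_left ih hθ0
        _ = θ ^ (n + 1) := by ring
  have hDbound : ∀ t, D t ≤ θ ^ (t / t₀) := by
    intro t
    calc D t ≤ D (t₀ * (t / t₀)) := hDanti _ _ (by rw [Nat.mul_comm]; exact Nat.div_mul_le_self t t₀)
      _ ≤ θ ^ (t / t₀) := hDpow _
  -- 1/K between mn and Mx
  have hsum_const : ∀ c : ℝ, ∑ _ξ ∈ S, c = K * c := fun c => by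
    rw [Finset.sum_const, nsmul_eq_mul, hK]
  have hmid : ∀ t, mn t ≤ 1 / K ∧ 1 / K ≤ Mx t := by
    intro t
    have hcol : ∑ ξ ∈ S, f t ξ = 1 := sum_pOneIter_col hE hρ t
    constructor
    · refine (le_div_iff₀ hK0).2 ?_
      calc mn t * K = K * mn t := by ring
        _ = ∑ _ξ ∈ S, mn t := (hsum_const _).symm
        _ ≤ ∑ ξ ∈ S, f t ξ := Finset.sum_le_sum fun ξ hξ => hge t ξ hξ
        _ = 1 := hcol
    · refine (div_le_iff₀ hK0).2 ?_
      calc (1:ℝ) = ∑ ξ ∈ S, f t ξ := hcol.symm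
        _ ≤ ∑ _ξ ∈ S, Mx t := Finset.sum_le_sum fun ξ hξ => hle t ξ hξ
        _ = K * Mx t := hsum_const _
        _ = Mx t * K := by ring
  have habs : ∀ t, |f t ξ₀ - 1 / K| ≤ θ ^ (t / t₀) := by
    intro t
    have h1 := hle t ξ₀ h₀
    have h2 := hge t ξ₀ h₀
    have h3 := (hmid t).1
    have h4 := (hmid t).2
    have h5 := hDbound t
    simp only [hD] at h5
    exact abs_le.2 ⟨by linarith, by linarith⟩
  have hg0 : Tendsto (fun t : ℕ => θ ^ (t / t₀)) atTop (nhds 0) := by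
    have h1 : Tendsto (fun n : ℕ => θ ^ n) atTop (nhds 0) :=
      tendsto_pow_atTop_nhds_zero_of_lt_one hθ0 hθ1
    have h2 : Tendsto (fun t : ℕ => t / t₀) atTop atTop :=
      Filter.tendsto_atTop_atTop.2 fun b =>
        ⟨b * t₀, fun t ht => (Nat.le_div_iff_mul_le (by omega)).2 ht⟩
    exact h1.comp h2
  have hzero : Tendsto (fun t => f t ξ₀ - 1 / K) atTop (nhds 0) :=
    squeeze_zero_norm (fun t => by simpa [Real.norm_eq_abs] using habs t) hg0
  have := hzero.add_const (1 / K)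
  simpa using this

end Model4

theorem card_stateSpace (W : Type*) [Fintype W] [DecidableEq W] (m : ℕ) :
    (stateSpace W m).card = Nat.multichoose (Fintype.card W) m := by
  rw [← Sym.card_sym_eq_multichoose]
  apply Finset.card_eq_of_equiv_fintype
  refine ⟨fun ξ => ⟨Finsupp.toMultiset (Finsupp.equivFunOnFinite.symm ξ.1), ?_⟩,
    fun s => ⟨fun a => (s : Multiset W).count a, ?_⟩, ?_, ?_⟩
  · rw [Finsupp.card_toMultiset, Finsupp.sum_fintype _ _ (fun _ => rfl)]
    simpa using mem_stateSpace.1 ξ.2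
  · refine mem_stateSpace.2 ?_
    have := Multiset.toFinset_sum_count_eq (s : Multiset W)
    rw [Finset.sum_subset (Finset.subset_univ (s : Multiset W).toFinset)
      (fun a _ ha => Multiset.count_eq_zero.2 fun h => ha (Multiset.mem_toFinset.2 h))] at this
    rw [this, Sym.card_coe]
  · intro ξ; ext a; simp
  · intro s; ext a; simp

theorem card_filter_stateSpace {V : Type*} [Fintype V] [DecidableEq V] {M d : ℕ}
    (x : V) (hd : d ≤ M) :
    ((stateSpace V M).filter fun ξ => ξ x = d).card
      = (stateSpace {y : V // y ≠ x} (M - d)).card := by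
  refine Finset.card_nbij' (i := fun ξ => fun y : {y : V // y ≠ x} => ξ y.1)
    (j := fun η => fun z : V => if h : z = x then d else η ⟨z, h⟩) ?_ ?_ ?_ ?_
  · intro ξ hξ
    obtain ⟨h1, h2⟩ := Finset.mem_filter.1 hξ
    refine mem_stateSpace.2 ?_
    have hs : ∑ z, ξ z = M := mem_stateSpace.1 h1
    have he : ∑ y : {y : V // y ≠ x}, ξ y.1 = ∑ z ∈ Finset.univ.erase x, ξ z :=
      (Finset.sum_subtype (p := fun z => z ≠ x) (Finset.univ.erase x)
        (fun z => by simp) ξ).symm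
    have := Finset.sum_erase_add Finset.univ ξ (Finset.mem_univ x)
    rw [he]
    clear hξ h1 he
    omega
  · intro η hη
    have hs : ∑ y, η y = M - d := mem_stateSpace.1 hη
    set F : V → ℕ := fun z => if h : z = x then d else η ⟨z, h⟩ with hF
    refine Finset.mem_filter.2 ⟨mem_stateSpace.2 ?_, by simp [hF]⟩
    have he : ∑ y : {y : V // y ≠ x}, F y.1
        = ∑ z ∈ Finset.univ.erase x, F z :=
      (Finset.sum_subtype (p := fun z => z ≠ x) (Finset.univ.erase x)
        (fun z => by simp) F).symm
    have h2 : ∑ y : {y : V // y ≠ x}, F y.1 = M - d := by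
      rw [← hs]; exact Finset.sum_congr rfl (fun y _ => by simp [hF, y.2])
    have h3 := Finset.sum_erase_add Finset.univ F (Finset.mem_univ x)
    have h4 : F x = d := by simp [hF]
    clear hη
    rw [← h3, ← he, h2, h4]
    omega
  · intro ξ hξ
    obtain ⟨-, h2⟩ := Finset.mem_filter.1 hξ
    funext z
    by_cases h : z = x <;> simp [h, h2]
  · intro η hη
    funext y
    simp [y.2]

/-- For Model 1 on a finite connected graph with `N ≥ 2` vertices and `M ≥ 1` dollars,
for every vertex `x`, every `0 ≤ d ≤ M` and every initial configuration,
`P(ξ_t(x) = d) → C(M+N−d−2, N−2) / C(M+N−1, N−1)` as `t → ∞`. -/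
theorem model_one_money_distribution {V : Type*} [Fintype V] [DecidableEq V]
    (G : SimpleGraph V) [DecidableRel G.Adj] (hG : G.Connected)
    (N M : ℕ) (hV : Fintype.card V = N) (hN : 2 ≤ N) (hM : 1 ≤ M)
    (x : V) (d : ℕ) (hd : d ≤ M) (ξ₀ : V → ℕ) (hξ₀ : ξ₀ ∈ stateSpace V M) :
    Tendsto
      (fun t : ℕ => ∑ ξ ∈ (stateSpace V M).filter (fun ξ => ξ x = d), pOneIter G M t ξ₀ ξ)
      atTop
      (nhds (((M + N - d - 2).choose (N - 2) : ℝ) / ((M + N - 1).choose (N - 1) : ℝ))) := by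
  classical
  have hc : 1 < Fintype.card V := by omega
  set S := stateSpace V M with hS
  set F := S.filter (fun ξ => ξ x = d) with hFdef
  have key : Tendsto
      (fun t : ℕ => ∑ ξ ∈ F, pOneIter G M t ξ₀ ξ) atTop
      (nhds (∑ _ξ ∈ F, 1 / (S.card : ℝ))) := by
    refine tendsto_finset_sum F fun ξ hξ => ?_
    exact pOneIter_tendsto hG hc hξ₀ (Finset.mem_filter.1 hξ).1
  have hScard : S.card = (M + N - 1).choose (N - 1) := by
    rw [hS, card_stateSpace, hV, Nat.multichoose_eq]
    have e1 : N + M - 1 = M + N - 1 := by omega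
    rw [e1]
    have e2 : M ≤ M + N - 1 := by omega
    have := Nat.choose_symm e2
    have e3 : M + N - 1 - M = N - 1 := by omega
    rw [e3] at this
    omega
  have hFcard : F.card = (M + N - d - 2).choose (N - 2) := by
    rw [hFdef, hS, card_filter_stateSpace x hd, card_stateSpace, Nat.multichoose_eq]
    have hsub : Fintype.card {y : V // y ≠ x} = N - 1 := by
      have h1 : Fintype.card {y : V // ¬ y = x} = Fintype.card V - Fintype.card {y : V // y = x} :=
        Fintype.card_subtype_compl _
      rw [Fintype.card_subtype_eq, hV] at h1
      exact h1
    rw [hsub]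
    have e1 : N - 1 + (M - d) - 1 = M + N - d - 2 := by omega
    rw [e1]
    have e2 : M - d ≤ M + N - d - 2 := by omega
    have := Nat.choose_symm e2
    have e3 : M + N - d - 2 - (M - d) = N - 2 := by omega
    rw [e3] at this
    omega
  have hval : (∑ _ξ ∈ F, 1 / (S.card : ℝ))
      = ((M + N - d - 2).choose (N - 2) : ℝ) / ((M + N - 1).choose (N - 1) : ℝ) := by
    rw [Finset.sum_const, nsmul_eq_mul, hFcard, hScard]
    rw [mul_one_div]
  rwa [hval] at key
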